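/- If u : ℝ → ℝ is measurable with |u(t)| ≤ 1 for all t, is 2π-periodic, and has zero mean on a period, then for every ω > 0, k > 0, and all t₀ ≤ t₁, one has |∫_{t₀}^{t₁} √ω · u(kωτ) dτ| ≤ 2π/(k√ω). In particular this bound tends to 0 as ω → ∞. -/

import Mathlib

open intervalIntegral Real

theorem dither_integral_bound
    (u : ℝ → ℝ) (k ω : ℝ)
    (hmeas : Measurable u)
    (hbound : ∀ t : ℝ, |u t| ≤ 1)
    (hper : ∀ t : ℝ, u (t + 2 * π) = u t)
    (hzero : ∫ τ in (0:ℝ)..(2 * π), u τ = 0)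
    (hk : 0 < k) (hω : 0 < ω) :
    ∀ t₀ t₁ : ℝ, t₀ ≤ t₁ →
      |∫ τ in t₀..t₁, Real.sqrt ω * u (k * ω * τ)| ≤ 2 * π / (k * Real.sqrt ω) := by
  have h2π : (0:ℝ) < 2 * π := by positivity
  have hperiodic : Function.Periodic u (2 * π) := hper
  have hint : ∀ a b : ℝ, IntervalIntegrable u MeasureTheory.volume a b := by
    intro a b
    apply IntervalIntegrable.mono_fun' (g := fun _ => (1:ℝ)) intervalIntegrable_const
      hmeas.aestronglyMeasurable
    filter_upwards with x
    simpa using hbound x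
  -- key lemma: the integral of u over any interval is bounded by 2π
  have key : ∀ a b : ℝ, |∫ x in a..b, u x| ≤ 2 * π := by
    intro a b
    set ε := Int.fract ((b - a) / (2 * π)) * (2 * π) with hε
    set n := ⌊(b - a) / (2 * π)⌋ with hn
    have hεmem : ε ∈ Set.Ico (0:ℝ) (2 * π) :=
      Int.fract_div_mul_self_mem_Ico (2 * π) (b - a) h2π
    have hb : b = a + ε + n • (2 * π) := by
      have := Int.fract_div_mul_self_add_zsmul_eq (2 * π) (b - a) h2π.ne'
      rw [← hε, ← hn] at this
      linarith [this]
    rw [hb, ← intervalIntegral.integral_add_adjacent_intervals (hint a (a + ε)) (hint (a + ε) _)]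
    have h2 : (∫ x in (a + ε)..(a + ε + n • (2 * π)), u x) = 0 := by
      rw [hperiodic.intervalIntegral_add_zsmul_eq n (a + ε) hint,
        hperiodic.intervalIntegral_add_eq (a + ε) 0, zero_add, hzero, smul_zero]
    rw [h2, add_zero]
    calc |∫ x in a..(a + ε), u x| ≤ 1 * |a + ε - a| := by
          rw [← Real.norm_eq_abs]
          apply intervalIntegral.norm_integral_le_of_norm_le_const
          intro x _
          simpa using hbound x
      _ ≤ 2 * π := by
          rw [one_mul, add_sub_cancel_left, abs_of_nonneg hεmem.1]
          exact hεmem.2.le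
  intro t₀ t₁ _
  have hkω : k * ω ≠ 0 := by positivity
  have hsqrt : (0:ℝ) < Real.sqrt ω := Real.sqrt_pos.mpr hω
  have hrw : (∫ τ in t₀..t₁, Real.sqrt ω * u (k * ω * τ)) =
      Real.sqrt ω * ((k * ω)⁻¹ * ∫ x in (k * ω * t₀)..(k * ω * t₁), u x) := by
    rw [intervalIntegral.integral_const_mul, intervalIntegral.integral_comp_mul_left _ hkω,
      smul_eq_mul]
  rw [hrw, abs_mul, abs_mul, abs_of_nonneg hsqrt.le, abs_of_nonneg (by positivity : (0:ℝ) ≤ (k*ω)⁻¹)]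
  have hbnd := key (k * ω * t₀) (k * ω * t₁)
  have hωeq : Real.sqrt ω * Real.sqrt ω = ω := Real.mul_self_sqrt hω.le
  calc Real.sqrt ω * ((k * ω)⁻¹ * |∫ x in (k * ω * t₀)..(k * ω * t₁), u x|)
      ≤ Real.sqrt ω * ((k * ω)⁻¹ * (2 * π)) := by
        apply mul_le_mul_of_nonneg_left _ hsqrt.le
        exact mul_le_mul_of_nonneg_left hbnd (by positivity)
    _ = 2 * π / (k * Real.sqrt ω) := by
        conv_lhs => rw [← hωeq]
        field_simp
        linear_combination Real.sqrt_sq hsqrt.le
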